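/- Suppose Kraus operators A_i (first step) and B_j^{(i)} (second step) on ℂ² satisfy ∑_{j∈L(K)} ∑_{i∈K} B_j^{(i)} A_i ρ A_i† B_j^{(i)}† = p ρ for some fixed p > 0 and all density matrices ρ on ℂ². Then for each pair (i,j) there is p_{ij} ≥ 0 with B_j^{(i)} A_i ρ A_i† B_j^{(i)}† = p_{ij} ρ for all ρ; equivalently, each B_j^{(i)}A_i is proportional to the identity (possibly with proportionality zero). -/

import Mathlib

open scoped ComplexConjugate ComplexOrder
open Finset Matrix

noncomputable section

/-- Index set for three qubits: (clone 1, clone 2, ancilla). -/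
abbrev I3 := Fin 2 × Fin 2 × Fin 2

/-- Image of |0⟩|00⟩ under the universal 1→2 cloner:
    √(2/3)|00⟩|1⟩ − (1/√6)(|01⟩+|10⟩)|0⟩. -/
def out0 : I3 → ℂ := fun p =>
  if p = (0, 0, 1) then ((Real.sqrt (2/3) : ℝ) : ℂ)
  else if p = (0, 1, 0) then -(((1 / Real.sqrt 6 : ℝ)) : ℂ)
  else if p = (1, 0, 0) then -(((1 / Real.sqrt 6 : ℝ)) : ℂ)
  else 0

/-- Image of |1⟩|00⟩ under the universal 1→2 cloner:
    −√(2/3)|11⟩|0⟩ + (1/√6)(|10⟩+|01⟩)|1⟩. -/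
def out1 : I3 → ℂ := fun p =>
  if p = (1, 1, 0) then -((Real.sqrt (2/3) : ℝ) : ℂ)
  else if p = (1, 0, 1) then (((1 / Real.sqrt 6 : ℝ)) : ℂ)
  else if p = (0, 1, 1) then (((1 / Real.sqrt 6 : ℝ)) : ℂ)
  else 0

/-- Output of the cloner on input α|0⟩+β|1⟩. -/
def cloneOut (α β : ℂ) : I3 → ℂ := fun p => α * out0 p + β * out1 p

/-- Output density matrix U(|φ⟩⟨φ| ⊗ |00⟩⟨00|)U†. -/
def rhoOut (α β : ℂ) : Matrix I3 I3 ℂ :=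
  Matrix.of fun p q => cloneOut α β p * conj (cloneOut α β q)

/-- Reduced state of the first clone. -/
def rhoC (α β : ℂ) : Matrix (Fin 2) (Fin 2) ℂ :=
  Matrix.of fun i j => ∑ b : Fin 2, ∑ c : Fin 2, rhoOut α β (i, b, c) (j, b, c)

/-- Reduced state of the ancilla. -/
def rhoA (α β : ℂ) : Matrix (Fin 2) (Fin 2) ℂ :=
  Matrix.of fun i j => ∑ a : Fin 2, ∑ b : Fin 2, rhoOut α β (a, b, i) (a, b, j)

/-- Reduced state of the two clones. -/
def rhoCC (α β : ℂ) : Matrix (Fin 2 × Fin 2) (Fin 2 × Fin 2) ℂ :=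
  Matrix.of fun p q => ∑ c : Fin 2, rhoOut α β (p.1, p.2, c) (q.1, q.2, c)

def σx : Matrix (Fin 2) (Fin 2) ℂ := !![0, 1; 1, 0]
def σy : Matrix (Fin 2) (Fin 2) ℂ := !![0, -Complex.I; Complex.I, 0]
def σz : Matrix (Fin 2) (Fin 2) ℂ := !![1, 0; 0, -1]

/-- s·σ for a real 3-vector s. -/
def pauliDot (s : Fin 3 → ℝ) : Matrix (Fin 2) (Fin 2) ℂ :=
  ((s 0 : ℝ) : ℂ) • σx + ((s 1 : ℝ) : ℂ) • σy + ((s 2 : ℝ) : ℂ) • σz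

/-- (1/2)(I + s·σ), the state with Bloch vector s. -/
def blochMat (s : Fin 3 → ℝ) : Matrix (Fin 2) (Fin 2) ℂ :=
  (1/2 : ℂ) • (1 + pauliDot s)

def φvec (α β : ℂ) : Fin 2 → ℂ := ![α, β]

/-- Outer product |v⟩⟨v| on a qubit. -/
def outer (v : Fin 2 → ℂ) : Matrix (Fin 2) (Fin 2) ℂ :=
  Matrix.of fun i j => v i * conj (v j)

/-- The images U(|i⟩|00⟩) of the two input basis states. -/
def Uout : Fin 2 → I3 → ℂ := ![out0, out1]

/-- Effective operator on the input qubit corresponding to an operator F on the output: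
    E i j = ⟨U(|i⟩|00⟩)| F |U(|j⟩|00⟩)⟩ = (⟨00|_{ba} U† F U |00⟩_{ba}) i j. -/
def effOf (F : Matrix I3 I3 ℂ) : Matrix (Fin 2) (Fin 2) ℂ :=
  Matrix.of fun i j => ∑ p : I3, ∑ q : I3, conj (Uout i p) * F p q * Uout j q

/-- F ⊗ I ⊗ I: a measurement on the first clone only. -/
def extC (F : Matrix (Fin 2) (Fin 2) ℂ) : Matrix I3 I3 ℂ :=
  Matrix.of fun p q => F p.1 q.1 * (if p.2 = q.2 then 1 else 0)

/-- I ⊗ I ⊗ F: a measurement on the ancilla only. -/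
def extA (F : Matrix (Fin 2) (Fin 2) ℂ) : Matrix I3 I3 ℂ :=
  Matrix.of fun p q => (if (p.1, p.2.1) = (q.1, q.2.1) then 1 else 0) * F p.2.2 q.2.2

/-- F ⊗ I_ancilla: a measurement on the two clones. -/
def extCC (F : Matrix (Fin 2 × Fin 2) (Fin 2 × Fin 2) ℂ) : Matrix I3 I3 ℂ :=
  Matrix.of fun p q => F (p.1, p.2.1) (q.1, q.2.1) * (if p.2.2 = q.2.2 then 1 else 0)

/-- Bell basis on two qubits, in the order φ⁺, ψ⁺, φ⁻, ψ⁻. -/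
def bell : Fin 4 → (Fin 2 × Fin 2) → ℂ :=
  ![fun p => if p = (0,0) then ((1 / Real.sqrt 2 : ℝ) : ℂ)
             else if p = (1,1) then ((1 / Real.sqrt 2 : ℝ) : ℂ) else 0,
    fun p => if p = (0,1) then ((1 / Real.sqrt 2 : ℝ) : ℂ)
             else if p = (1,0) then ((1 / Real.sqrt 2 : ℝ) : ℂ) else 0,
    fun p => if p = (0,0) then ((1 / Real.sqrt 2 : ℝ) : ℂ)
             else if p = (1,1) then -((1 / Real.sqrt 2 : ℝ) : ℂ) else 0,
    fun p => if p = (0,1) then ((1 / Real.sqrt 2 : ℝ) : ℂ)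
             else if p = (1,0) then -((1 / Real.sqrt 2 : ℝ) : ℂ) else 0]

/-- Kronecker product of two single-qubit matrices. -/
def kron2 (A B : Matrix (Fin 2) (Fin 2) ℂ) : Matrix (Fin 2 × Fin 2) (Fin 2 × Fin 2) ℂ :=
  Matrix.of fun p q => A p.1 q.1 * B p.2 q.2

/-- Projector onto the symmetric subspace of two qubits: I − |ψ⁻⟩⟨ψ⁻|. -/
def symProj : Matrix (Fin 2 × Fin 2) (Fin 2 × Fin 2) ℂ :=
  1 - Matrix.of fun p q => bell 3 p * conj (bell 3 q)

/-- Projector onto the antisymmetric subspace: |ψ⁻⟩⟨ψ⁻|. -/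
def antiProj : Matrix (Fin 2 × Fin 2) (Fin 2 × Fin 2) ℂ :=
  Matrix.of fun p q => bell 3 p * conj (bell 3 q)

/-- Computational basis vector |abc⟩ of three qubits. -/
def e3 (a b c : Fin 2) : I3 → ℂ := fun p => if p = (a, b, c) then 1 else 0

/-- ∑ₚ conj(v p) w p, the inner product on three qubits. -/
def inner3 (v w : I3 → ℂ) : ℂ := ∑ p : I3, conj (v p) * w p

lemma outer_posSemidef' (v : Fin 2 → ℂ) : (outer v).PosSemidef := by
  refine Matrix.PosSemidef.of_dotProduct_mulVec_nonneg ?_ ?_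
  · ext i j
    simp only [outer, conjTranspose_apply, Matrix.of_apply, star_mul', RCLike.star_def,
      Complex.conj_conj]
    ring
  · intro x
    have key : star x ⬝ᵥ (outer v *ᵥ x)
        = ((Complex.normSq (∑ a, conj (x a) * v a) : ℝ) : ℂ) := by
      rw [← Complex.mul_conj]
      simp only [dotProduct, mulVec, outer, Matrix.of_apply, Pi.star_apply, Fin.sum_univ_two,
        map_add, _root_.map_mul, Complex.conj_conj, RCLike.star_def]
      ring
    rw [key]
    exact_mod_cast Complex.normSq_nonneg _

lemma outer_trace' (v : Fin 2 → ℂ) (hv : ∑ a, Complex.normSq (v a) = 1) :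
    (outer v).trace = 1 := by
  have : (outer v).trace = ((∑ a, Complex.normSq (v a) : ℝ) : ℂ) := by
    simp [Matrix.trace, outer, Matrix.diag, Complex.mul_conj]
  rw [this, hv, Complex.ofReal_one]

lemma mul_outer_mul' (M : Matrix (Fin 2) (Fin 2) ℂ) (v : Fin 2 → ℂ) :
    M * outer v * Mᴴ = outer (M *ᵥ v) := by
  ext i j
  simp only [mul_apply, outer, Matrix.of_apply, conjTranspose_apply, mulVec, dotProduct,
    Fin.sum_univ_two, map_add, _root_.map_mul, Complex.conj_conj, RCLike.star_def]
  ring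

lemma dot_outer' (u w : Fin 2 → ℂ) :
    star u ⬝ᵥ (outer w *ᵥ u) = ((Complex.normSq (∑ a, conj (u a) * w a) : ℝ) : ℂ) := by
  rw [← Complex.mul_conj]
  simp only [dotProduct, mulVec, outer, Matrix.of_apply, Pi.star_apply, Fin.sum_univ_two,
    map_add, _root_.map_mul, Complex.conj_conj, RCLike.star_def]
  ring

lemma qform_sum' {α : Type*} (s : Finset α) (f : α → Matrix (Fin 2) (Fin 2) ℂ)
    (u : Fin 2 → ℂ) :
    star u ⬝ᵥ ((∑ x ∈ s, f x) *ᵥ u) = ∑ x ∈ s, star u ⬝ᵥ (f x *ᵥ u) := by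
  classical
  induction s using Finset.induction with
  | empty => simp
  | insert _ _ hx ih =>
    rw [Finset.sum_insert hx, Finset.sum_insert hx, Matrix.add_mulVec, dotProduct_add, ih]

/-- if a two-step Kraus process reproduces p·ρ for all density matrices ρ,
then each individual branch satisfies B_j⁽ⁱ⁾A_i ρ A_i†B_j⁽ⁱ⁾† = p_ij ρ, i.e. each
B_j⁽ⁱ⁾A_i is proportional to the identity. -/
theorem restoration_branches {ι κ : Type} [Fintype ι] [Fintype κ]
    (A : ι → Matrix (Fin 2) (Fin 2) ℂ) (B : ι → κ → Matrix (Fin 2) (Fin 2) ℂ)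
    (p : ℝ) (hp : 0 < p)
    (h : ∀ ρ : Matrix (Fin 2) (Fin 2) ℂ, ρ.PosSemidef → ρ.trace = 1 →
      ∑ i : ι, ∑ j : κ, (B i j * A i) * ρ * (B i j * A i)ᴴ = (p : ℂ) • ρ) :
    ∀ (i : ι) (j : κ),
      (∃ pij : ℝ, 0 ≤ pij ∧
        ∀ ρ : Matrix (Fin 2) (Fin 2) ℂ, ρ.PosSemidef → ρ.trace = 1 →
          (B i j * A i) * ρ * (B i j * A i)ᴴ = (pij : ℂ) • ρ) ∧
      ∃ c : ℂ, B i j * A i = c • 1 := by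
  -- cross relation: for every unit vector v and every branch,
  -- the image of v under the branch operator is parallel to v
  have cross : ∀ (v : Fin 2 → ℂ), (∑ a, Complex.normSq (v a)) = 1 →
      ∀ (i : ι) (j : κ),
        ∑ a, conj ((![-conj (v 1), conj (v 0)]) a) * (((B i j * A i) *ᵥ v) a) = 0 := by
    intro v hv
    set u : Fin 2 → ℂ := ![-conj (v 1), conj (v 0)] with hu
    have hsum := h (outer v) (outer_posSemidef' v) (outer_trace' v hv)
    have hq := congrArg (fun M : Matrix (Fin 2) (Fin 2) ℂ => star u ⬝ᵥ (M *ᵥ u)) hsum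
    simp only [qform_sum', Matrix.smul_mulVec, dotProduct_smul, smul_eq_mul] at hq
    have hterm : ∀ (i : ι) (j : κ),
        star u ⬝ᵥ ((B i j * A i * outer v * (B i j * A i)ᴴ) *ᵥ u)
          = ((Complex.normSq (∑ a, conj (u a) * (((B i j * A i) *ᵥ v) a)) : ℝ) : ℂ) := by
      intro i j
      rw [mul_outer_mul', dot_outer']
    have huv : ∑ a, conj (u a) * v a = 0 := by
      simp [hu, Fin.sum_univ_two]
      ring
    rw [dot_outer', huv] at hq
    simp only [hterm, Complex.normSq_zero, Complex.ofReal_zero, mul_zero] at hq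
    have hre := congrArg Complex.re hq
    simp only [Complex.re_sum, Complex.ofReal_re, Complex.zero_re] at hre
    have hzero : ∀ i : ι, ∀ j : κ,
        Complex.normSq (∑ a, conj (u a) * (((B i j * A i) *ᵥ v) a)) = 0 := by
      have h1 : ∀ i ∈ (Finset.univ : Finset ι),
          (0:ℝ) ≤ ∑ j : κ, Complex.normSq (∑ a, conj (u a) * (((B i j * A i) *ᵥ v) a)) := by
        intro i _
        exact Finset.sum_nonneg fun j _ => Complex.normSq_nonneg _
      intro i j
      have h2 := (Finset.sum_eq_zero_iff_of_nonneg h1).mp hre i (Finset.mem_univ i)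
      have h3 : ∀ j ∈ (Finset.univ : Finset κ),
          (0:ℝ) ≤ Complex.normSq (∑ a, conj (u a) * (((B i j * A i) *ᵥ v) a)) :=
        fun j _ => Complex.normSq_nonneg _
      exact (Finset.sum_eq_zero_iff_of_nonneg h3).mp h2 j (Finset.mem_univ j)
    intro i j
    exact Complex.normSq_eq_zero.mp (hzero i j)
  intro i j
  set C := B i j * A i with hC
  -- extract entrywise relations
  have cross' : ∀ (v : Fin 2 → ℂ), (∑ a, Complex.normSq (v a)) = 1 →
      v 0 * (C *ᵥ v) 1 = v 1 * (C *ᵥ v) 0 := by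
    intro v hv
    have := cross v hv i j
    simp only [Fin.sum_univ_two, Matrix.cons_val_zero, Matrix.cons_val_one, Matrix.head_cons,
      map_neg, Complex.conj_conj] at this
    linear_combination this
  have h10 : C 1 0 = 0 := by
    have := cross' ![1, 0] (by simp [Fin.sum_univ_two])
    simpa [mulVec, dotProduct, Fin.sum_univ_two] using this
  have h01 : C 0 1 = 0 := by
    have := cross' ![0, 1] (by simp [Fin.sum_univ_two])
    symm
    simpa [mulVec, dotProduct, Fin.sum_univ_two] using this
  have hdiag : C 1 1 = C 0 0 := by
    set r : ℝ := (Real.sqrt 2)⁻¹ with hr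
    have hr2 : r * r = 1/2 := by
      rw [hr, ← mul_inv]
      rw [Real.mul_self_sqrt (by norm_num : (0:ℝ) ≤ 2)]
      norm_num
    have hrne : (r : ℂ) ≠ 0 := by
      simp only [ne_eq, Complex.ofReal_eq_zero, hr]
      positivity
    have := cross' ![(r : ℂ), (r : ℂ)] (by
      simp [Fin.sum_univ_two, Complex.normSq_ofReal, hr2]; linarith)
    simp only [mulVec, dotProduct, Fin.sum_univ_two, Matrix.cons_val_zero, Matrix.cons_val_one,
      Matrix.head_cons, h10, h01] at this
    -- r * (C 1 1 * r ...) = r * (C 0 0 * r ...)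
    have h2 : (r:ℂ) * ((r:ℂ) * C 1 1) = (r:ℂ) * ((r:ℂ) * C 0 0) := by
      linear_combination this
    exact mul_left_cancel₀ hrne (mul_left_cancel₀ hrne h2)
  refine ⟨⟨Complex.normSq (C 0 0), Complex.normSq_nonneg _, ?_⟩, ⟨C 0 0, ?_⟩⟩
  · intro ρ _ _
    have hCid : C = C 0 0 • 1 := by
      ext a b
      fin_cases a <;> fin_cases b <;>
        simp [h10, h01, hdiag, Matrix.smul_apply, Matrix.one_apply]
    rw [hCid]
    rw [Matrix.conjTranspose_smul, Matrix.conjTranspose_one]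
    simp only [Matrix.smul_mul, Matrix.mul_smul, Matrix.one_mul, Matrix.mul_one, smul_smul,
      Matrix.smul_apply, Matrix.one_apply_eq, smul_eq_mul, mul_one, RCLike.star_def]
    rw [mul_comm, Complex.mul_conj]
  · ext a b
    fin_cases a <;> fin_cases b <;>
      simp [h10, h01, hdiag, Matrix.smul_apply, Matrix.one_apply]
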